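/- Let d ≥ 1 and let A be a column-stochastic d×d real matrix. Then there exist a natural number D with 1 ≤ D ≤ d(d²−d+1), a probability vector q on Fin D, and a permutation π of Fin d × Fin D such that for all x, x' ∈ Fin d: A x x' = ∑_{y' ∈ Fin D, (π (x', y')).1 = x} q y'. Equivalently, in terms of the permutation matrix Π of π, A x x' = ∑_{y, y'} Π (x,y) (x',y') · q y' (classical Stinespring dilation: every stochastic matrix arises by marginalizing a permutation acting on the system tensored with a fixed ancilla probability vector). -/

import Mathlib

namespace CStine

variable {d : ℕ}

/-- Cumulative sums of a column. -/
noncomputable def S (A : Fin d → Fin d → ℝ) (x' : Fin d) (n : ℕ) : ℝ :=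
  ∑ j ∈ Finset.univ.filter (fun j : Fin d => (j : ℕ) < n), A j x'

lemma S_zero (A : Fin d → Fin d → ℝ) (x' : Fin d) : S A x' 0 = 0 := by simp [S]

lemma S_mono (A : Fin d → Fin d → ℝ) (h : ∀ x x', 0 ≤ A x x') (x' : Fin d) :
    Monotone (S A x') := by
  intro a b hab
  apply Finset.sum_le_sum_of_subset_of_nonneg
  · intro j hj
    simp only [Finset.mem_filter, Finset.mem_univ, true_and] at *
    omega
  · intros; apply h

lemma S_d (A : Fin d → Fin d → ℝ) (hc : ∀ x', ∑ x, A x x' = 1) (x' : Fin d) :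
    S A x' d = 1 := by
  rw [← hc x']
  apply Finset.sum_congr _ (fun _ _ => rfl)
  ext j
  simp [j.isLt]

lemma S_nonneg (A : Fin d → Fin d → ℝ) (h : ∀ x x', 0 ≤ A x x') (x' : Fin d) (n : ℕ) :
    0 ≤ S A x' n := Finset.sum_nonneg fun _ _ => h _ _

lemma S_le_one (A : Fin d → Fin d → ℝ) (h : ∀ x x', 0 ≤ A x x')
    (hc : ∀ x', ∑ x, A x x' = 1) (x' : Fin d) (n : ℕ) : S A x' n ≤ 1 := by
  rw [← hc x']
  exact Finset.sum_le_sum_of_subset_of_nonneg (Finset.filter_subset _ _)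
    (fun _ _ _ => h _ _)

lemma S_succ (A : Fin d → Fin d → ℝ) (x' : Fin d) (i : Fin d) :
    S A x' ((i : ℕ) + 1) = S A x' i + A i x' := by
  unfold S
  have h : Finset.univ.filter (fun j : Fin d => (j : ℕ) < (i : ℕ) + 1)
      = insert i (Finset.univ.filter (fun j : Fin d => (j : ℕ) < (i : ℕ))) := by
    ext j
    simp only [Finset.mem_filter, Finset.mem_univ, true_and, Finset.mem_insert, Fin.ext_iff]
    omega
  rw [h, Finset.sum_insert (by simp)]
  ring

/-- The list of all interior cut points. -/
noncomputable def vv (A : Fin d → Fin d → ℝ) : Fin (d * (d - 1)) → ℝ :=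
  fun m => S A (finProdFinEquiv.symm m).1 (((finProdFinEquiv.symm m).2 : ℕ) + 1)

/-- Sorted cut points. -/
noncomputable def ww (A : Fin d → Fin d → ℝ) : Fin (d * (d - 1)) → ℝ :=
  vv A ∘ Tuple.sort (vv A)

lemma ww_mono (A : Fin d → Fin d → ℝ) : Monotone (ww A) := Tuple.monotone_sort (vv A)

lemma vv_nonneg (A : Fin d → Fin d → ℝ) (h : ∀ x x', 0 ≤ A x x') (m) : 0 ≤ vv A m :=
  S_nonneg A h _ _

lemma vv_le_one (A : Fin d → Fin d → ℝ) (h : ∀ x x', 0 ≤ A x x')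
    (hc : ∀ x', ∑ x, A x x' = 1) (m) : vv A m ≤ 1 := S_le_one A h hc _ _

/-- The grid `0 = t 0 ≤ t 1 ≤ ... ≤ t (d(d-1)) ≤ t (d(d-1)+1) = 1` (constant 1 afterwards). -/
noncomputable def tt (A : Fin d → Fin d → ℝ) (k : ℕ) : ℝ :=
  if hk : k = 0 then 0 else if h : k ≤ d * (d - 1) then ww A ⟨k - 1, by omega⟩ else 1

lemma tt_nonneg (A : Fin d → Fin d → ℝ) (h : ∀ x x', 0 ≤ A x x') (k : ℕ) : 0 ≤ tt A k := by
  unfold tt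
  split
  · exact le_refl 0
  · split
    · exact vv_nonneg A h _
    · norm_num

lemma tt_le_one (A : Fin d → Fin d → ℝ) (h : ∀ x x', 0 ≤ A x x')
    (hc : ∀ x', ∑ x, A x x' = 1) (k : ℕ) : tt A k ≤ 1 := by
  unfold tt
  split
  · norm_num
  · split
    · exact vv_le_one A h hc _
    · exact le_refl 1

lemma tt_mono (A : Fin d → Fin d → ℝ) (h : ∀ x x', 0 ≤ A x x')
    (hc : ∀ x', ∑ x, A x x' = 1) : Monotone (tt A) := by
  intro a b hab
  rcases Nat.eq_zero_or_pos a with ha | ha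
  · rw [ha]
    simpa [tt] using tt_nonneg A h b
  by_cases hb : b ≤ d * (d - 1)
  · have ha' : a ≤ d * (d - 1) := le_trans hab hb
    rw [tt, tt, dif_neg (by omega : ¬ a = 0), dif_neg (by omega : ¬ b = 0),
      dif_pos ha', dif_pos hb]
    exact ww_mono A (by simp [Fin.le_def]; omega)
  · have hb1 : tt A b = 1 := by
      rw [tt, dif_neg (by omega : ¬ b = 0), dif_neg hb]
    rw [hb1]
    exact tt_le_one A h hc a

lemma tt_zero (A : Fin d → Fin d → ℝ) : tt A 0 = 0 := by simp [tt]

lemma tt_top (A : Fin d → Fin d → ℝ) : tt A (d * (d - 1) + 1) = 1 := by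
  rw [tt, dif_neg (by omega), dif_neg (by omega)]

/-- every cumulative value `S x' j`, `1 ≤ j ≤ d`, appears on the grid. -/
lemma S_mem_tt (A : Fin d → Fin d → ℝ) (hc : ∀ x', ∑ x, A x x' = 1)
    (x' : Fin d) (j : ℕ) (hj1 : 1 ≤ j) (hjd : j ≤ d) :
    ∃ m, 1 ≤ m ∧ m ≤ d * (d - 1) + 1 ∧ tt A m = S A x' j := by
  by_cases hjd' : j = d
  · exact ⟨d * (d - 1) + 1, by omega, le_refl _, by rw [tt_top, hjd', S_d A hc]⟩
  · have hd1 : j - 1 < d - 1 := by omega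
    set p : Fin d × Fin (d - 1) := (x', ⟨j - 1, hd1⟩)
    set m0 : Fin (d * (d - 1)) := finProdFinEquiv p
    set m1 : Fin (d * (d - 1)) := (Tuple.sort (vv A))⁻¹ m0
    refine ⟨(m1 : ℕ) + 1, by omega, by omega, ?_⟩
    have hm1 : (m1 : ℕ) < d * (d - 1) := m1.isLt
    have h1 : tt A ((m1 : ℕ) + 1) = ww A ⟨(m1 : ℕ) + 1 - 1, by omega⟩ := by
      rw [tt, dif_neg (by omega), dif_pos (by omega)]
    rw [h1]
    have : (⟨(m1 : ℕ) + 1 - 1, by omega⟩ : Fin (d * (d - 1))) = m1 := Fin.ext (by simp)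
    rw [this]
    show vv A (Tuple.sort (vv A) ((Tuple.sort (vv A))⁻¹ m0)) = _
    rw [Equiv.Perm.inv_def, Equiv.apply_symm_apply]
    show S A (finProdFinEquiv.symm m0).1 (((finProdFinEquiv.symm m0).2 : ℕ) + 1) = _
    rw [Equiv.symm_apply_apply]
    show S A x' ((j - 1) + 1) = S A x' j
    congr 1
    omega


/-- quantile function: largest `i` with `S x' i ≤ tt k`. -/
noncomputable def ff (A : Fin d → Fin d → ℝ) (hd : 0 < d) (k : ℕ) (x' : Fin d) : Fin d :=
  if h : (Finset.univ.filter (fun i : Fin d => S A x' (i : ℕ) ≤ tt A k)).Nonempty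
  then (Finset.univ.filter (fun i : Fin d => S A x' (i : ℕ) ≤ tt A k)).max' h
  else ⟨0, hd⟩

lemma ff_ne (A : Fin d → Fin d → ℝ) (hd : 0 < d) (hn : ∀ x x', 0 ≤ A x x') (k : ℕ)
    (x' : Fin d) :
    (Finset.univ.filter (fun i : Fin d => S A x' (i : ℕ) ≤ tt A k)).Nonempty := by
  refine ⟨⟨0, hd⟩, ?_⟩
  simp only [Finset.mem_filter, Finset.mem_univ, true_and]
  show S A x' 0 ≤ tt A k
  rw [S_zero]
  exact tt_nonneg A hn k

lemma ff_le (A : Fin d → Fin d → ℝ) (hd : 0 < d) (hn : ∀ x x', 0 ≤ A x x') (k : ℕ)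
    (x' : Fin d) : S A x' ((ff A hd k x' : Fin d) : ℕ) ≤ tt A k := by
  have h := ff_ne A hd hn k x'
  have := Finset.max'_mem _ h
  simp only [Finset.mem_filter, Finset.mem_univ, true_and] at this
  simpa [ff, dif_pos h] using this

lemma le_ff (A : Fin d → Fin d → ℝ) (hd : 0 < d) (hn : ∀ x x', 0 ≤ A x x') (k : ℕ)
    (x' : Fin d) (i : Fin d) (hi : S A x' (i : ℕ) ≤ tt A k) : i ≤ ff A hd k x' := by
  have h := ff_ne A hd hn k x'
  rw [ff, dif_pos h]
  exact Finset.le_max' _ i (by simp [hi])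

lemma tt_gt (A : Fin d → Fin d → ℝ) (hn : ∀ x x', 0 ≤ A x x')
    (hc : ∀ x', ∑ x, A x x' = 1) (x' : Fin d) (k j : ℕ)
    (hj1 : 1 ≤ j) (hjd : j ≤ d) (h : tt A k < S A x' j) : tt A (k + 1) ≤ S A x' j := by
  obtain ⟨m, hm1, hm2, hm⟩ := S_mem_tt A hc x' j hj1 hjd
  rw [← hm]
  apply tt_mono A hn hc
  by_contra hcon
  push_neg at hcon
  have : tt A m ≤ tt A k := tt_mono A hn hc (by omega)
  rw [hm] at this
  linarith

lemma key (A : Fin d → Fin d → ℝ) (hd : 0 < d) (hn : ∀ x x', 0 ≤ A x x')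
    (hc : ∀ x', ∑ x, A x x' = 1) (x' i : Fin d) (k : ℕ) :
    (if ff A hd k x' = i then tt A (k + 1) - tt A k else 0)
      = (min (tt A (k + 1)) (S A x' ((i : ℕ) + 1)) - min (tt A k) (S A x' ((i : ℕ) + 1)))
        - (min (tt A (k + 1)) (S A x' (i : ℕ)) - min (tt A k) (S A x' (i : ℕ))) := by
  have hkk : tt A k ≤ tt A (k + 1) := tt_mono A hn hc (Nat.le_succ k)
  have hmono := S_mono A hn x'
  by_cases hFi : ff A hd k x' = i
  · rw [if_pos hFi]
    have h0 : S A x' (i : ℕ) ≤ tt A k := by rw [← hFi]; exact ff_le A hd hn k x'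
    have h1 : tt A (k + 1) ≤ S A x' ((i : ℕ) + 1) := by
      by_cases hi : (i : ℕ) + 1 = d
      · rw [hi, S_d A hc]
        exact tt_le_one A hn hc _
      · have hilt : (i : ℕ) + 1 < d := by have := i.isLt; omega
        have hgt : tt A k < S A x' ((i : ℕ) + 1) := by
          by_contra hle
          push_neg at hle
          have := le_ff A hd hn k x' ⟨(i : ℕ) + 1, hilt⟩ hle
          rw [hFi] at this
          simp [Fin.le_def] at this
        exact tt_gt A hn hc x' k ((i : ℕ) + 1) (by omega) (by omega) hgt
    rw [min_eq_left h1, min_eq_left (le_trans hkk h1),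
      min_eq_right (le_trans h0 hkk), min_eq_right h0]
    ring
  · rw [if_neg hFi]
    by_cases h0 : S A x' (i : ℕ) ≤ tt A k
    · have hiF : i < ff A hd k x' :=
        lt_of_le_of_ne (le_ff A hd hn k x' i h0) (fun h => hFi h.symm)
      have hle : S A x' ((i : ℕ) + 1) ≤ S A x' ((ff A hd k x' : Fin d) : ℕ) :=
        hmono (by exact_mod_cast hiF)
      have hc1 : S A x' ((i : ℕ) + 1) ≤ tt A k := le_trans hle (ff_le A hd hn k x')
      have hc0 : S A x' (i : ℕ) ≤ S A x' ((i : ℕ) + 1) := hmono (Nat.le_succ _)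
      rw [min_eq_right (le_trans hc1 hkk), min_eq_right hc1,
        min_eq_right (le_trans (le_trans hc0 hc1) hkk), min_eq_right (le_trans hc0 hc1)]
      ring
    · push_neg at h0
      have hi0 : (i : ℕ) ≠ 0 := by
        intro h
        rw [h, S_zero] at h0
        exact absurd h0 (not_lt.mpr (tt_nonneg A hn k))
      have h1 : tt A (k + 1) ≤ S A x' (i : ℕ) :=
        tt_gt A hn hc x' k (i : ℕ) (by omega) i.isLt.le h0
      have hc0 : S A x' (i : ℕ) ≤ S A x' ((i : ℕ) + 1) := hmono (Nat.le_succ _)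
      rw [min_eq_left h1, min_eq_left (le_trans hkk h1),
        min_eq_left (le_trans h1 hc0), min_eq_left (le_trans (le_trans hkk h1) hc0)]
      ring

lemma col_sum (A : Fin d → Fin d → ℝ) (hd : 0 < d) (hn : ∀ x x', 0 ≤ A x x')
    (hc : ∀ x', ∑ x, A x x' = 1) (x' x : Fin d) :
    ∑ k ∈ Finset.range (d * (d - 1) + 1),
      (if ff A hd k x' = x then tt A (k + 1) - tt A k else 0) = A x x' := by
  rw [Finset.sum_congr rfl (fun k _ => key A hd hn hc x' x k)]
  rw [Finset.sum_sub_distrib,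
    Finset.sum_range_sub (fun k => min (tt A k) (S A x' ((x : ℕ) + 1))),
    Finset.sum_range_sub (fun k => min (tt A k) (S A x' (x : ℕ)))]
  rw [tt_zero, tt_top]
  rw [min_eq_right (S_le_one A hn hc x' _), min_eq_right (S_le_one A hn hc x' _),
    min_eq_left (S_nonneg A hn x' _), min_eq_left (S_nonneg A hn x' _)]
  have := S_succ A x' x
  linarith

/-- dilation permutation on system × (shift ancilla × interval ancilla). -/
noncomputable def perm0 (A : Fin d → Fin d → ℝ) (hd : 0 < d) :
    Equiv.Perm (Fin d × (Fin d × Fin (d * (d - 1) + 1))) :=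
  haveI : NeZero d := ⟨hd.ne'⟩
  { toFun := fun p => (p.2.1 + ff A hd (p.2.2 : ℕ) p.1, (p.1, p.2.2))
    invFun := fun p => (p.2.1, (p.1 - ff A hd (p.2.2 : ℕ) p.2.1, p.2.2))
    left_inv := fun p => by simp
    right_inv := fun p => by simp }

end CStine

/-- Classical Stinespring dilation: every column-stochastic matrix arises by
marginalizing a permutation acting on the system tensored with a fixed ancilla
probability vector, with ancilla dimension at most `d * (d^2 - d + 1)`. -/
theorem classical_stinespring (d : ℕ) (hd : 1 ≤ d) (A : Fin d → Fin d → ℝ)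
    (hA_nonneg : ∀ x x', 0 ≤ A x x')
    (hA_col : ∀ x', ∑ x, A x x' = 1) :
    ∃ D : ℕ, 1 ≤ D ∧ D ≤ d * (d ^ 2 - d + 1) ∧
      ∃ (q : Fin D → ℝ) (π : Equiv.Perm (Fin d × Fin D)),
        (∀ y, 0 ≤ q y) ∧ (∑ y, q y = 1) ∧
        ∀ x x' : Fin d,
          A x x' = ∑ y' ∈ Finset.univ.filter (fun y' : Fin D => (π (x', y')).1 = x), q y' := by
  classical
  haveI : NeZero d := ⟨by omega⟩
  set N : ℕ := d * (d - 1) + 1 with hN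
  refine ⟨d * N, Nat.mul_pos hd (by omega), ?_, ?_⟩
  · apply Nat.mul_le_mul_left
    have h1 : d * (d - 1) = d ^ 2 - d := by
      rw [Nat.mul_sub, mul_one, sq]
    omega
  · set q0 : Fin N → ℝ := fun k => CStine.tt A ((k : ℕ) + 1) - CStine.tt A (k : ℕ) with hq0
    set e : Fin d × Fin N ≃ Fin (d * N) := finProdFinEquiv with he
    set qq : Fin (d * N) → ℝ :=
      fun m => if (e.symm m).1 = (0 : Fin d) then q0 (e.symm m).2 else 0 with hqq
    set c : Fin d × (Fin d × Fin N) ≃ Fin d × Fin (d * N) :=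
      (Equiv.refl (Fin d)).prodCongr e with hce
    set π : Equiv.Perm (Fin d × Fin (d * N)) :=
      (c.symm.trans (CStine.perm0 A hd)).trans c with hπ
    have hq0nn : ∀ k, 0 ≤ q0 k := fun k =>
      sub_nonneg.mpr (CStine.tt_mono A hA_nonneg hA_col (Nat.le_succ _))
    refine ⟨qq, π, ?_, ?_, ?_⟩
    · intro m
      rw [hqq]
      dsimp only
      split
      · exact hq0nn _
      · exact le_refl 0
    · rw [← Equiv.sum_comp e qq]
      have hterm : ∀ z : Fin d × Fin N, qq (e z) = if z.1 = 0 then q0 z.2 else 0 := by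
        intro z
        rw [hqq]
        simp
      rw [Finset.sum_congr rfl (fun z _ => hterm z), Fintype.sum_prod_type]
      rw [Finset.sum_eq_single (0 : Fin d) (fun b _ hb => by simp [hb]) (by simp)]
      simp only [eq_self_iff_true, if_true]
      rw [Fin.sum_univ_eq_sum_range (fun j => CStine.tt A (j + 1) - CStine.tt A j) N]
      rw [Finset.sum_range_sub (CStine.tt A), CStine.tt_zero, hN, CStine.tt_top]
      ring
    · intro x x'
      rw [Finset.sum_filter, ← Equiv.sum_comp e]
      have hterm : ∀ z : Fin d × Fin N,
          (if (π (x', e z)).1 = x then qq (e z) else 0)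
            = if z.1 + CStine.ff A hd (z.2 : ℕ) x' = x
              then (if z.1 = 0 then q0 z.2 else 0) else 0 := by
        intro z
        have h1 : π (x', e z) = (z.1 + CStine.ff A hd (z.2 : ℕ) x', e (x', z.2)) := by
          rw [hπ]
          simp only [Equiv.trans_apply]
          have h2 : c.symm (x', e z) = (x', z) := by
            rw [hce]
            simp
          rw [h2]
          have h3 : CStine.perm0 A hd (x', z)
              = (z.1 + CStine.ff A hd (z.2 : ℕ) x', (x', z.2)) := rfl
          rw [h3, hce]
          simp
        rw [h1, hqq]
        simp
      rw [Finset.sum_congr rfl (fun z _ => hterm z), Fintype.sum_prod_type]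
      rw [Finset.sum_eq_single (0 : Fin d)
        (fun b _ hb => Finset.sum_eq_zero (fun k _ => by simp [hb]))
        (by simp)]
      simp only [zero_add, eq_self_iff_true, if_true]
      rw [Fin.sum_univ_eq_sum_range
        (fun j => if CStine.ff A hd j x' = x then CStine.tt A (j + 1) - CStine.tt A j else 0) N]
      exact (CStine.col_sum A hd hA_nonneg hA_col x' x).symm
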